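/- (Jewell–Orlik bijection.) Let A be a real linear arrangement ordered so as to satisfy the cut property with respect to the base chamber B. Then the recursively defined map η is a bijection from the set of chambers T(A) to the set nbc(A) of no-broken-circuit sets of A, with η(B) = ∅. -/

import Mathlib

open scoped Classical

/-- The sign of a real number, as an element of `SignType`. -/
noncomputable def sgn (r : ℝ) : SignType := if 0 < r then 1 else if r < 0 then -1 else 0

/-- An arrangement of linear hyperplanes in a real vector space `V`, with linearly
ordered ground set a finite set `E` of natural numbers: hyperplane `H_i = ker (f i)`
for `i ∈ E`. -/
structure NArr (V : Type) [AddCommGroup V] [Module ℝ V] where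
  E : Finset ℕ
  f : ℕ → V →ₗ[ℝ] ℝ
  nz : ∀ i ∈ E, f i ≠ 0

variable {V : Type} [AddCommGroup V] [Module ℝ V]

/-- A chamber of `A`, encoded by its sign vector (supported on the ground set). -/
def NArr.IsChamber (A : NArr V) (C : ℕ → SignType) : Prop :=
  (∀ i ∈ A.E, C i ≠ 0) ∧ (∀ i ∉ A.E, C i = 0) ∧ ∃ x, ∀ i ∈ A.E, sgn (A.f i x) = C i

/-- The largest (= last) hyperplane of `A`. -/
noncomputable def NArr.last (A : NArr V) : ℕ := A.E.sup id

/-- The deletion `A' = A ∖ {H_n}` of the last hyperplane. -/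
noncomputable def NArr.delete (A : NArr V) : NArr V :=
  ⟨A.E.erase A.last, A.f, fun i hi => A.nz i (Finset.mem_of_mem_erase hi)⟩

/-- The ground set of the restriction `A'' = {H ∩ H_n | H ∈ A'}`: each flat `H ∩ H_n`
is labeled by the smallest hyperplane of `A` containing it. -/
noncomputable def NArr.resE (A : NArr V) : Finset ℕ :=
  (A.E.erase A.last).filter fun i =>
    (A.f i).domRestrict (LinearMap.ker (A.f A.last)) ≠ 0 ∧
    ∀ j ∈ A.E.erase A.last,
      LinearMap.ker (A.f j) ⊓ LinearMap.ker (A.f A.last) =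
        LinearMap.ker (A.f i) ⊓ LinearMap.ker (A.f A.last) → i ≤ j

/-- The restriction `A''` of `A` to its last hyperplane, with the induced ordering. -/
noncomputable def NArr.restrict (A : NArr V) : NArr ↥(LinearMap.ker (A.f A.last)) :=
  ⟨A.resE, fun i => (A.f i).domRestrict (LinearMap.ker (A.f A.last)),
   fun i hi => (Finset.mem_filter.mp hi).2.1⟩

/-- Restriction of a sign vector to a subset of the ground set. -/
def restrictSigns (S : Finset ℕ) (C : ℕ → SignType) : ℕ → SignType :=
  fun i => if i ∈ S then C i else 0

/-- `C ∈ B↑`: the chamber `C` lies on the non-`B` side of the last hyperplane `H_n` and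
the chamber of the deletion `A'` containing it is cut by `H_n`. -/
def NArr.upperCond (A : NArr V) (B C : ℕ → SignType) : Prop :=
  C A.last ≠ B A.last ∧
    ∃ x, A.f A.last x = 0 ∧ ∀ i ∈ A.E.erase A.last, sgn (A.f i x) = C i

/-- The Jewell–Orlik recursion: `IsJO V A B η` holds iff `η` is obtained by the recursive
deletion–restriction definition of the map of Jewell and Orlik for the arrangement `A`
with base chamber `B`:  `η(C) = η'(C')` if `C ∈ U ∪ B↓`, and
`η(C) = {H_n} ∪ η''(C ∩ H_n)` (labels taken in `A`) if `C ∈ B↑`. -/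
inductive IsJO :
    ∀ (V : Type) [AddCommGroup V] [Module ℝ V],
      NArr V → (ℕ → SignType) → ((ℕ → SignType) → Finset ℕ) → Prop
  | base {V : Type} [AddCommGroup V] [Module ℝ V] (A : NArr V) (B : ℕ → SignType)
      (η : (ℕ → SignType) → Finset ℕ) :
      A.E = ∅ → (∀ C, η C = ∅) → IsJO V A B η
  | step {V : Type} [AddCommGroup V] [Module ℝ V] (A : NArr V) (B : ℕ → SignType)
      (η η' : (ℕ → SignType) → Finset ℕ) (η'' : (ℕ → SignType) → Finset ℕ) :
      A.E.Nonempty →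
      IsJO V A.delete (restrictSigns (A.E.erase A.last) B) η' →
      IsJO ↥(LinearMap.ker (A.f A.last)) A.restrict (restrictSigns A.resE B) η'' →
      (∀ C, A.IsChamber C → ¬ A.upperCond B C →
        η C = η' (restrictSigns (A.E.erase A.last) C)) →
      (∀ C, A.IsChamber C → A.upperCond B C →
        η C = insert A.last (η'' (restrictSigns A.resE C))) →
      IsJO V A B η

/-- Independent sets of the underlying matroid. -/
def NArr.Indep (A : NArr V) (S : Finset ℕ) : Prop :=
  S ⊆ A.E ∧ LinearIndependent ℝ (fun i : S => A.f i.1)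

/-- Circuits: minimal dependent subsets. -/
def NArr.IsCircuit (A : NArr V) (S : Finset ℕ) : Prop :=
  S ⊆ A.E ∧ ¬ A.Indep S ∧ ∀ T ⊂ S, A.Indep T

/-- Broken circuits: circuits with their smallest element removed. -/
def NArr.IsBroken (A : NArr V) (S : Finset ℕ) : Prop :=
  ∃ T, A.IsCircuit T ∧ ∃ h : T.Nonempty, S = T.erase (T.min' h)

/-- The no-broken-circuit sets of `A`. -/
def NArr.nbc (A : NArr V) : Set (Finset ℕ) :=
  {S | A.Indep S ∧ ∀ T, A.IsBroken T → ¬ T ⊆ S}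

/-- The real value of a sign. -/
def signVal : SignType → ℝ
  | SignType.zero => 0
  | SignType.neg => -1
  | SignType.pos => 1

/-- The ordering of the hyperplanes of `A` satisfies the cut property with respect to
`B` : every hyperplane which is not the first one meets the interior of the base
chamber of the preceding ones. -/
def NArr.CutProp (A : NArr V) (B : ℕ → SignType) : Prop :=
  ∀ j ∈ A.E, (∃ i ∈ A.E, i < j) →
    ∃ x, A.f j x = 0 ∧ ∀ i ∈ A.E, i < j → 0 < signVal (B i) * A.f i x

/-- The flat spanned by a set of hyperplanes. -/
noncomputable def NArr.flatOf (A : NArr V) (S : Finset ℕ) : Submodule ℝ V :=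
  ⨅ i ∈ S, LinearMap.ker (A.f i)


section Aux

variable {V : Type} [AddCommGroup V] [Module ℝ V]

/-! ### Basic `sgn` lemmas -/

lemma sgn_of_pos {r : ℝ} (h : 0 < r) : sgn r = 1 := if_pos h

lemma sgn_of_neg {r : ℝ} (h : r < 0) : sgn r = -1 := by
  unfold sgn; rw [if_neg (by linarith), if_pos h]

@[simp] lemma sgn_zero : sgn 0 = 0 := by unfold sgn; norm_num

lemma sgn_eq_one_iff {r : ℝ} : sgn r = 1 ↔ 0 < r := by
  constructor
  · intro h; by_contra hr
    rcases lt_or_eq_of_le (not_lt.mp hr) with h' | h'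
    · rw [sgn_of_neg h'] at h; exact absurd h (by decide)
    · rw [h'] at h; simp at h
  · exact sgn_of_pos

lemma sgn_eq_neg_one_iff {r : ℝ} : sgn r = -1 ↔ r < 0 := by
  constructor
  · intro h; by_contra hr
    rcases lt_or_eq_of_le (not_lt.mp hr) with h' | h'
    · rw [sgn_of_pos h'] at h; exact absurd h (by decide)
    · rw [← h'] at h; simp at h
  · exact sgn_of_neg

@[simp] lemma sgn_eq_zero_iff {r : ℝ} : sgn r = 0 ↔ r = 0 := by
  constructor
  · intro h; by_contra hr
    rcases lt_or_gt_of_ne hr with h' | h'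
    · rw [sgn_of_neg h'] at h; exact absurd h (by decide)
    · rw [sgn_of_pos h'] at h; exact absurd h (by decide)
  · intro h; rw [h]; simp

lemma sgn_ne_zero_iff {r : ℝ} : sgn r ≠ 0 ↔ r ≠ 0 := sgn_eq_zero_iff.not

lemma sgn_cases (r : ℝ) : sgn r = 0 ∧ r = 0 ∨ sgn r = 1 ∧ 0 < r ∨ sgn r = -1 ∧ r < 0 := by
  rcases lt_trichotomy r 0 with h | h | h
  · exact Or.inr (Or.inr ⟨sgn_of_neg h, h⟩)
  · exact Or.inl ⟨by rw [h]; simp, h⟩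
  · exact Or.inr (Or.inl ⟨sgn_of_pos h, h⟩)

lemma sgn_neg (r : ℝ) : sgn (-r) = -sgn r := by
  rcases sgn_cases r with ⟨h1, h2⟩ | ⟨h1, h2⟩ | ⟨h1, h2⟩ <;> rw [h1]
  · rw [h2]; simp
  · rw [sgn_of_neg (show -r < 0 by linarith)]
  · rw [sgn_of_pos (show (0:ℝ) < -r by linarith)]; decide

lemma sgn_mul (a b : ℝ) : sgn (a * b) = sgn a * sgn b := by
  rcases sgn_cases a with ⟨h1, h2⟩ | ⟨h1, h2⟩ | ⟨h1, h2⟩ <;>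
  rcases sgn_cases b with ⟨g1, g2⟩ | ⟨g1, g2⟩ | ⟨g1, g2⟩ <;>
  rw [h1, g1] <;>
  first
    | (rw [h2]; simp)
    | (rw [g2]; simp)
    | (rw [sgn_of_pos (mul_pos h2 g2)]; decide)
    | (rw [sgn_of_neg (mul_neg_of_pos_of_neg h2 g2)]; decide)
    | (rw [sgn_of_neg (mul_neg_of_neg_of_pos h2 g2)]; decide)
    | (rw [sgn_of_pos (mul_pos_of_neg_of_neg h2 g2)]; decide)

lemma sgn_add_same {a b : ℝ} {s : SignType} (ha : sgn a = s) (hb : sgn b = s) :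
    sgn (a + b) = s := by
  rcases sgn_cases a with ⟨h1, h2⟩ | ⟨h1, h2⟩ | ⟨h1, h2⟩ <;> rw [h1] at ha <;> subst ha
  · rw [sgn_eq_zero_iff] at hb ⊢; rw [h2, hb]; ring
  · rw [sgn_eq_one_iff] at hb ⊢; linarith
  · rw [sgn_eq_neg_one_iff] at hb ⊢; linarith

lemma sgn_smul_of_pos {c : ℝ} (hc : 0 < c) (r : ℝ) : sgn (c * r) = sgn r := by
  rw [sgn_mul, sgn_of_pos hc, one_mul]

lemma sgn_add_of_abs_lt {a b : ℝ} (h : |b| < |a|) : sgn (a + b) = sgn a := by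
  rcases lt_trichotomy a 0 with ha | ha | ha
  · rw [sgn_of_neg ha, sgn_of_neg (by rw [abs_of_neg ha] at h; cases abs_lt.mp h; linarith)]
  · simp [ha] at h; linarith [abs_nonneg b]
  · rw [sgn_of_pos ha, sgn_of_pos (by rw [abs_of_pos ha] at h; cases abs_lt.mp h; linarith)]

lemma signType_forced {s t u : SignType} (hu : u ≠ 0) (hs : s ≠ 0) (ht : t ≠ 0)
    (hsu : s ≠ u) (htu : t ≠ u) : s = t := by
  cases s <;> cases t <;> cases u <;> simp_all

/-! ### Linear functional lemmas -/

lemma exists_smul_of_vanishing (g h : V →ₗ[ℝ] ℝ) (hv : ∀ x, g x = 0 → h x = 0) :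
    ∃ c : ℝ, h = c • g := by
  by_cases hg : g = 0
  · refine ⟨0, ?_⟩
    ext x
    simp [hv x (by rw [hg]; rfl)]
  · obtain ⟨u, hu⟩ : ∃ u, g u ≠ 0 := by
      by_contra hcon; push_neg at hcon
      exact hg (by ext x; simp [hcon x])
    refine ⟨h u / g u, ?_⟩
    ext x
    have hy : g (x - (g x / g u) • u) = 0 := by
      simp only [map_sub, map_smul, smul_eq_mul]
      field_simp
      ring
    have := hv _ hy
    simp only [map_sub, map_smul, smul_eq_mul] at this
    have hx : h x = g x / g u * h u := by linarith
    simp [hx, smul_eq_mul]; ring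

/-! ### Independence via coefficients -/

lemma NArr.indep_iff (A : NArr V) (S : Finset ℕ) :
    A.Indep S ↔ S ⊆ A.E ∧
      ∀ c : ℕ → ℝ, ∑ i ∈ S, c i • A.f i = 0 → ∀ i ∈ S, c i = 0 := by
  unfold NArr.Indep
  constructor
  · rintro ⟨hSE, hLI⟩
    refine ⟨hSE, fun c hc i hi => ?_⟩
    rw [linearIndependent_iff'] at hLI
    refine hLI S.attach (fun j => c j.1) ?_ ⟨i, hi⟩ (Finset.mem_attach _ _)
    rw [← hc]; exact Finset.sum_attach S (fun i => c i • A.f i)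
  · rintro ⟨hSE, hc⟩
    refine ⟨hSE, ?_⟩
    rw [linearIndependent_iff']
    intro s g hg j hj
    set c : ℕ → ℝ := fun m => if h : m ∈ S then (if (⟨m, h⟩ : {x // x ∈ S}) ∈ s then g ⟨m, h⟩ else 0) else 0 with hcdef
    have key : ∀ i : {x // x ∈ S}, c i.1 = if i ∈ s then g i else 0 := by
      rintro ⟨m, h⟩
      simp only [hcdef, dif_pos h]
    have hsum : ∑ i ∈ S, c i • A.f i = 0 := by
      rw [← Finset.sum_attach S (fun i => c i • A.f i)]
      calc ∑ i ∈ S.attach, c i.1 • A.f i.1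
          = ∑ i ∈ S.attach, (if i ∈ s then g i • A.f i.1 else 0) := by
            refine Finset.sum_congr rfl fun i _ => ?_
            rw [key i]; split_ifs <;> simp
        _ = ∑ i ∈ s, g i • A.f i.1 := by
            rw [Finset.sum_ite_mem, Finset.inter_eq_right.mpr (fun x _ => Finset.mem_attach _ x)]
        _ = 0 := hg
    have := hc c hsum j.1 j.2
    rwa [key j, if_pos hj] at this

lemma NArr.indep_empty (A : NArr V) : A.Indep ∅ := by
  rw [A.indep_iff]; exact ⟨Finset.empty_subset _, fun c _ i hi => absurd hi (by simp)⟩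

lemma NArr.indep_singleton (A : NArr V) {i : ℕ} (hi : i ∈ A.E) : A.Indep {i} := by
  rw [A.indep_iff]
  refine ⟨by simpa using hi, fun c hc j hj => ?_⟩
  rw [Finset.mem_singleton] at hj; subst hj
  rw [Finset.sum_singleton] at hc
  rcases smul_eq_zero.mp hc with h | h
  · exact h
  · exact absurd h (A.nz j hi)

end Aux


section Aux2

variable {V : Type} [AddCommGroup V] [Module ℝ V]

/-! ### Circuits -/

lemma NArr.exists_circuit (A : NArr V) (S : Finset ℕ) :
    S ⊆ A.E → ¬ A.Indep S → ∃ C ⊆ S, A.IsCircuit C := by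
  induction S using Finset.strongInduction with
  | _ S ih =>
    intro hrest hdep
    by_cases hall : ∀ T ⊂ S, A.Indep T
    · exact ⟨S, Finset.Subset.refl S, hrest, hdep, hall⟩
    · push_neg at hall
      obtain ⟨T, hTS, hTdep⟩ := hall
      obtain ⟨C, hCT, hC⟩ := ih T hTS (hTS.subset.trans hrest) hTdep
      exact ⟨C, hCT.trans hTS.subset, hC⟩

lemma NArr.circuit_coeffs (A : NArr V) {C : Finset ℕ} (hC : A.IsCircuit C) :
    ∃ c : ℕ → ℝ, ∑ i ∈ C, c i • A.f i = 0 ∧ ∀ i ∈ C, c i ≠ 0 := by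
  obtain ⟨hCE, hdep, hmin⟩ := hC
  rw [A.indep_iff] at hdep
  push_neg at hdep
  obtain ⟨c, hsum, i, hi, hci⟩ := hdep hCE
  refine ⟨c, hsum, fun j hj => ?_⟩
  intro hcj
  have hTC : C.filter (fun m => c m ≠ 0) ⊂ C := by
    rw [Finset.ssubset_iff_of_subset (Finset.filter_subset _ _)]
    exact ⟨j, hj, fun hmem => (Finset.mem_filter.mp hmem).2 hcj⟩
  have hind := hmin _ hTC
  rw [A.indep_iff] at hind
  refine hci (hind.2 c ?_ i (Finset.mem_filter.mpr ⟨hi, hci⟩))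
  rw [Finset.sum_filter_of_ne, hsum]
  intro x _ hx hcx
  exact hx (by rw [hcx, zero_smul])

lemma NArr.circuit_nonempty (A : NArr V) {C : Finset ℕ} (hC : A.IsCircuit C) : C.Nonempty := by
  rcases Finset.eq_empty_or_nonempty C with h | h
  · exact absurd (by rw [h]; exact A.indep_empty) hC.2.1
  · exact h

lemma NArr.nbc_no_low_circuit (A : NArr V) {S C : Finset ℕ} (hS : S ∈ A.nbc)
    (hC : A.IsCircuit C) {j : ℕ} (hsub : C ⊆ insert j S) (hj : ∀ x ∈ C, j ≤ x) : False := by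
  have hne : C.Nonempty := A.circuit_nonempty hC
  refine hS.2 (C.erase (C.min' hne)) ⟨C, hC, hne, rfl⟩ ?_
  intro x hx
  obtain ⟨hxne, hxC⟩ := Finset.mem_erase.mp hx
  rcases Finset.mem_insert.mp (hsub hxC) with rfl | hxS
  · exact absurd (le_antisymm (Finset.min'_le C x hxC) (hj _ (C.min'_mem hne))).symm hxne
  · exact hxS

/-! ### The last hyperplane -/

lemma NArr.last_mem (A : NArr V) (hne : A.E.Nonempty) : A.last ∈ A.E := by
  obtain ⟨b, hb, he⟩ := Finset.exists_mem_eq_sup A.E hne id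
  rw [NArr.last, he]; exact hb

lemma NArr.le_last (A : NArr V) {i : ℕ} (hi : i ∈ A.E) : i ≤ A.last :=
  Finset.le_sup (f := id) hi

lemma NArr.lt_last (A : NArr V) {i : ℕ} (hi : i ∈ A.E.erase A.last) : i < A.last :=
  lt_of_le_of_ne (A.le_last (Finset.mem_of_mem_erase hi)) (Finset.ne_of_mem_erase hi)

/-! ### Restriction lemmas -/

lemma domRestrict_eq_zero_iff {g h : V →ₗ[ℝ] ℝ} :
    h.domRestrict (LinearMap.ker g) = 0 ↔ ∀ x, g x = 0 → h x = 0 := by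
  constructor
  · intro h0 x hx
    have := DFunLike.congr_fun h0 ⟨x, LinearMap.mem_ker.mpr hx⟩
    simpa using this
  · intro hv
    ext ⟨x, hx⟩
    simpa using hv x (LinearMap.mem_ker.mp hx)

lemma NArr.parallel_of_g_zero (A : NArr V) {i : ℕ} (hi : i ∈ A.E)
    (h0 : (A.f i).domRestrict (LinearMap.ker (A.f A.last)) = 0) :
    ∃ c : ℝ, c ≠ 0 ∧ A.f i = c • A.f A.last := by
  rw [domRestrict_eq_zero_iff] at h0
  obtain ⟨c, hc⟩ := exists_smul_of_vanishing (A.f A.last) (A.f i) h0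
  refine ⟨c, fun hc0 => A.nz i hi ?_, hc⟩
  rw [hc, hc0, zero_smul]

lemma NArr.mem_resE (A : NArr V) {i : ℕ} :
    i ∈ A.resE ↔ i ∈ A.E.erase A.last ∧
      ((A.f i).domRestrict (LinearMap.ker (A.f A.last)) ≠ 0 ∧
        ∀ j ∈ A.E.erase A.last,
          LinearMap.ker (A.f j) ⊓ LinearMap.ker (A.f A.last) =
            LinearMap.ker (A.f i) ⊓ LinearMap.ker (A.f A.last) → i ≤ j) := by
  unfold NArr.resE
  exact Finset.mem_filter

lemma NArr.exists_label (A : NArr V) {i : ℕ} (hi : i ∈ A.E.erase A.last)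
    (hgi : (A.f i).domRestrict (LinearMap.ker (A.f A.last)) ≠ 0) :
    ∃ k ∈ A.resE, k ≤ i ∧
      LinearMap.ker (A.f k) ⊓ LinearMap.ker (A.f A.last) =
      LinearMap.ker (A.f i) ⊓ LinearMap.ker (A.f A.last) := by
  set T := (A.E.erase A.last).filter (fun j => LinearMap.ker (A.f j) ⊓ LinearMap.ker (A.f A.last)
      = LinearMap.ker (A.f i) ⊓ LinearMap.ker (A.f A.last)) with hT
  have hiT : i ∈ T := Finset.mem_filter.mpr ⟨hi, rfl⟩
  have hTne : T.Nonempty := ⟨i, hiT⟩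
  obtain ⟨hkE, hkflat⟩ := Finset.mem_filter.mp (T.min'_mem hTne)
  have hgk : (A.f (T.min' hTne)).domRestrict (LinearMap.ker (A.f A.last)) ≠ 0 := by
    intro h0
    apply hgi
    rw [domRestrict_eq_zero_iff] at h0 ⊢
    intro x hx
    have hmem : x ∈ LinearMap.ker (A.f (T.min' hTne)) ⊓ LinearMap.ker (A.f A.last) := by
      rw [Submodule.mem_inf]
      exact ⟨LinearMap.mem_ker.mpr (h0 x hx), LinearMap.mem_ker.mpr hx⟩
    rw [hkflat, Submodule.mem_inf] at hmem
    exact LinearMap.mem_ker.mp hmem.1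
  refine ⟨T.min' hTne, A.mem_resE.mpr ⟨hkE, hgk, fun j hj hflat =>
      T.min'_le j (Finset.mem_filter.mpr ⟨hj, by rw [hflat, hkflat]⟩)⟩,
    T.min'_le i hiT, hkflat⟩

lemma NArr.label_prop (A : NArr V) {i k : ℕ}
    (hflat : LinearMap.ker (A.f k) ⊓ LinearMap.ker (A.f A.last) =
      LinearMap.ker (A.f i) ⊓ LinearMap.ker (A.f A.last))
    (hgi : (A.f i).domRestrict (LinearMap.ker (A.f A.last)) ≠ 0) :
    ∃ c : ℝ, c ≠ 0 ∧ (A.f i).domRestrict (LinearMap.ker (A.f A.last)) =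
      c • (A.f k).domRestrict (LinearMap.ker (A.f A.last)) := by
  have hvan : ∀ x, ((A.f k).domRestrict (LinearMap.ker (A.f A.last))) x = 0 →
      ((A.f i).domRestrict (LinearMap.ker (A.f A.last))) x = 0 := by
    rintro ⟨x, hx⟩ hkx
    have hmem : x ∈ LinearMap.ker (A.f k) ⊓ LinearMap.ker (A.f A.last) := by
      rw [Submodule.mem_inf]
      exact ⟨LinearMap.mem_ker.mpr (by simpa using hkx), hx⟩
    rw [hflat, Submodule.mem_inf] at hmem
    simpa using LinearMap.mem_ker.mp hmem.1
  obtain ⟨c, hc⟩ := exists_smul_of_vanishing _ _ hvan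
  exact ⟨c, fun h0 => hgi (by rw [hc, h0, zero_smul]), hc⟩

lemma NArr.sum_g_eq_zero_iff (A : NArr V) (S : Finset ℕ) (c : ℕ → ℝ) :
    ∑ i ∈ S, c i • (A.f i).domRestrict (LinearMap.ker (A.f A.last)) = 0 ↔
      ∃ b : ℝ, ∑ i ∈ S, c i • A.f i = b • A.f A.last := by
  constructor
  · intro h0
    apply exists_smul_of_vanishing
    intro x hx
    have := DFunLike.congr_fun h0 ⟨x, LinearMap.mem_ker.mpr hx⟩
    simpa [LinearMap.sum_apply] using this
  · rintro ⟨b, hb⟩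
    ext ⟨x, hx⟩
    have hx' := LinearMap.mem_ker.mp hx
    have := DFunLike.congr_fun hb x
    simp only [LinearMap.sum_apply, LinearMap.smul_apply, smul_eq_mul,
      LinearMap.domRestrict_apply, LinearMap.zero_apply] at this ⊢
    rw [this, hx', mul_zero]

end Aux2


section Aux3

variable {V : Type} [AddCommGroup V] [Module ℝ V]

/-- Between two points on opposite sides of a wall there is a point on the wall whose
signs agree with the common signs of the endpoints. -/
lemma exists_wall_point (g : V →ₗ[ℝ] ℝ) {x₁ x₂ : V} (h1 : g x₁ < 0) (h2 : 0 < g x₂) :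
    ∃ x : V, g x = 0 ∧
      ∀ h' : V →ₗ[ℝ] ℝ, sgn (h' x₁) = sgn (h' x₂) → sgn (h' x) = sgn (h' x₁) := by
  set t : ℝ := g x₁ / (g x₁ - g x₂) with ht
  have hden : g x₁ - g x₂ < 0 := by linarith
  have ht0 : 0 < t := div_pos_iff.mpr (Or.inr ⟨h1, hden⟩)
  have ht1 : t < 1 := by
    rw [ht, div_lt_iff_of_neg hden]; linarith
  refine ⟨x₁ + t • (x₂ - x₁), ?_, ?_⟩
  · have hgx : g (x₁ + t • (x₂ - x₁)) = g x₁ + t * (g x₂ - g x₁) := by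
      simp only [map_add, map_smul, map_sub, smul_eq_mul]
    have hne : g x₁ - g x₂ ≠ 0 := ne_of_lt hden
    rw [hgx, ht]
    field_simp
    ring
  · intro h' hs
    have hval : h' (x₁ + t • (x₂ - x₁)) = (1 - t) * h' x₁ + t * h' x₂ := by
      simp only [map_add, map_smul, map_sub, smul_eq_mul]; ring
    rw [hval]
    rcases sgn_cases (h' x₁) with ⟨e1, e2⟩ | ⟨e1, e2⟩ | ⟨e1, e2⟩ <;> rw [e1] <;> rw [e1] at hs
    · rw [e2, sgn_eq_zero_iff.mp hs.symm]
      simp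
    · have := sgn_eq_one_iff.mp hs.symm
      exact sgn_of_pos (by nlinarith)
    · have := sgn_eq_neg_one_iff.mp hs.symm
      exact sgn_of_neg (by nlinarith)

/-- Perturbation lemma: small perturbations do not change nonzero signs. -/
lemma exists_eps (f : ℕ → V →ₗ[ℝ] ℝ) (x v : V) (s : Finset ℕ) :
    (∀ i ∈ s, f i x ≠ 0) → ∃ ε : ℝ, 0 < ε ∧ ∀ δ : ℝ, 0 < δ → δ ≤ ε →
      ∀ i ∈ s, sgn (f i (x + δ • v)) = sgn (f i x) := by
  induction s using Finset.induction_on with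
  | empty => exact fun _ => ⟨1, one_pos, fun δ _ _ i hi => absurd hi (by simp)⟩
  | @insert a s ha ih =>
    intro hx
    obtain ⟨ε, hε, hall⟩ := ih (fun i hi => hx i (Finset.mem_insert_of_mem hi))
    have hax : f a x ≠ 0 := hx a (Finset.mem_insert_self a s)
    by_cases hav : f a v = 0
    · refine ⟨ε, hε, fun δ hδ hδε i hi => ?_⟩
      rcases Finset.mem_insert.mp hi with rfl | hi'
      · have heq : f i (x + δ • v) = f i x := by
          simp [map_add, map_smul, smul_eq_mul, hav]
        rw [heq]
      · exact hall δ hδ hδε i hi'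
    · refine ⟨min ε (|f a x| / (2 * |f a v|)),
        lt_min hε (by positivity), fun δ hδ hδε i hi => ?_⟩
      rcases Finset.mem_insert.mp hi with rfl | hi'
      · have hfd : f i (x + δ • v) = f i x + δ * f i v := by
          simp [map_add, map_smul, smul_eq_mul]
        rw [hfd]
        apply sgn_add_of_abs_lt
        have h1 : |δ * f i v| = δ * |f i v| := by rw [abs_mul, abs_of_pos hδ]
        have h2 : δ ≤ |f i x| / (2 * |f i v|) := le_trans hδε (min_le_right _ _)
        have h3 : 0 < |f i v| := abs_pos.mpr hav
        have h4 : 0 < |f i x| := abs_pos.mpr hax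
        rw [h1]
        calc δ * |f i v| ≤ (|f i x| / (2 * |f i v|)) * |f i v| := by nlinarith
          _ < |f i x| := by
              rw [div_mul_eq_mul_div, div_lt_iff₀ (by positivity)]
              nlinarith
      · exact hall δ hδ (le_trans hδε (min_le_left _ _)) i hi'

end Aux3


section Aux4

variable {V : Type} [AddCommGroup V] [Module ℝ V]

lemma signType_neg_forced {s t : SignType} (ht : t ≠ 0) (hs : s ≠ 0) (hne : s ≠ t) :
    s = -t := by
  cases s <;> cases t <;> simp_all

lemma signType_neg_ne_self {s : SignType} (hs : s ≠ 0) : -s ≠ s := by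
  cases s <;> simp_all

lemma signType_neg_ne_zero {s : SignType} (hs : s ≠ 0) : -s ≠ 0 := by
  cases s <;> simp_all

lemma exists_sgn_eq (g : V →ₗ[ℝ] ℝ) (hg : g ≠ 0) {s : SignType} (hs : s ≠ 0) :
    ∃ v, sgn (g v) = s := by
  obtain ⟨w, hw⟩ : ∃ w, g w ≠ 0 := by
    by_contra hcon; push_neg at hcon; exact hg (by ext y; simp [hcon y])
  by_cases h : sgn (g w) = s
  · exact ⟨w, h⟩
  · refine ⟨-w, ?_⟩
    rw [map_neg, sgn_neg, signType_neg_forced hs (sgn_ne_zero_iff.mpr hw) h]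
    simp

/-- The sign vector of a point. -/
noncomputable def NArr.ptSigns (A : NArr V) (x : V) : ℕ → SignType :=
  fun i => if i ∈ A.E then sgn (A.f i x) else 0

lemma NArr.ptSigns_mem (A : NArr V) (x : V) {i : ℕ} (hi : i ∈ A.E) :
    A.ptSigns x i = sgn (A.f i x) := if_pos hi

lemma NArr.ptSigns_not_mem (A : NArr V) (x : V) {i : ℕ} (hi : i ∉ A.E) :
    A.ptSigns x i = 0 := if_neg hi

lemma NArr.chamber_of_point (A : NArr V) (x : V) (hx : ∀ i ∈ A.E, A.f i x ≠ 0) :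
    A.IsChamber (A.ptSigns x) :=
  ⟨fun i hi => by rw [A.ptSigns_mem x hi]; exact sgn_ne_zero_iff.mpr (hx i hi),
   fun i hi => A.ptSigns_not_mem x hi, ⟨x, fun i hi => (A.ptSigns_mem x hi).symm⟩⟩

lemma NArr.chamber_delete (A : NArr V) {C : ℕ → SignType} (hC : A.IsChamber C) :
    A.delete.IsChamber (restrictSigns (A.E.erase A.last) C) := by
  obtain ⟨h1, h2, x, hx⟩ := hC
  refine ⟨fun i hi => ?_, fun i hi => ?_, ⟨x, fun i hi => ?_⟩⟩
  · simp only [restrictSigns, if_pos (show i ∈ A.E.erase A.last from hi)]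
    exact h1 i (Finset.mem_of_mem_erase hi)
  · simp only [restrictSigns, if_neg (show i ∉ A.E.erase A.last from hi)]
  · simp only [restrictSigns, if_pos (show i ∈ A.E.erase A.last from hi)]
    exact hx i (Finset.mem_of_mem_erase hi)

lemma NArr.chamber_restrict_of_upper (A : NArr V) {B C : ℕ → SignType} (hC : A.IsChamber C)
    (hup : A.upperCond B C) : A.restrict.IsChamber (restrictSigns A.resE C) := by
  obtain ⟨h1, h2, -⟩ := hC
  obtain ⟨-, x, hx0, hx⟩ := hup
  refine ⟨fun i hi => ?_, fun i hi => ?_, ⟨⟨x, LinearMap.mem_ker.mpr hx0⟩, fun i hi => ?_⟩⟩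
  · simp only [restrictSigns, if_pos (show i ∈ A.resE from hi)]
    exact h1 i (Finset.mem_of_mem_erase (A.mem_resE.mp hi).1)
  · simp only [restrictSigns, if_neg (show i ∉ A.resE from hi)]
  · simp only [restrictSigns, if_pos (show i ∈ A.resE from hi)]
    exact hx i (A.mem_resE.mp hi).1

lemma NArr.cut_of_two (A : NArr V) {C₁ C₂ : ℕ → SignType} (hne : A.E.Nonempty)
    (h₁ : A.IsChamber C₁) (h₂ : A.IsChamber C₂)
    (heq : ∀ i ∈ A.E.erase A.last, C₁ i = C₂ i)
    (hlast : C₁ A.last ≠ C₂ A.last) :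
    ∃ x, A.f A.last x = 0 ∧ ∀ i ∈ A.E.erase A.last, sgn (A.f i x) = C₁ i := by
  obtain ⟨a1, -, x₁, hx₁⟩ := h₁
  obtain ⟨a2, -, x₂, hx₂⟩ := h₂
  have hl := A.last_mem hne
  have e₁ : sgn (A.f A.last x₁) = C₁ A.last := hx₁ _ hl
  have e₂ : sgn (A.f A.last x₂) = C₂ A.last := hx₂ _ hl
  have hsame : ∀ i ∈ A.E.erase A.last, sgn (A.f i x₁) = sgn (A.f i x₂) := by
    intro i hi
    rw [hx₁ i (Finset.mem_of_mem_erase hi), hx₂ i (Finset.mem_of_mem_erase hi)]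
    exact heq i hi
  rcases sgn_cases (A.f A.last x₁) with ⟨s1, s2⟩ | ⟨s1, s2⟩ | ⟨s1, s2⟩
  · exact absurd (e₁.symm.trans s1) (a1 _ hl)
  · -- x₁ on positive side; x₂ must be on negative side
    have hx₂neg : A.f A.last x₂ < 0 := by
      rcases sgn_cases (A.f A.last x₂) with ⟨u1, u2⟩ | ⟨u1, u2⟩ | ⟨u1, u2⟩
      · exact absurd (e₂.symm.trans u1) (a2 _ hl)
      · exact absurd (e₁.symm.trans ((s1.trans u1.symm).trans e₂)) hlast
      · exact u2
    obtain ⟨x, hx0, hpres⟩ := exists_wall_point (A.f A.last) hx₂neg s2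
    exact ⟨x, hx0, fun i hi => by
      rw [hpres (A.f i) (hsame i hi).symm, hx₂ i (Finset.mem_of_mem_erase hi),
        ← heq i hi]⟩
  · have hx₂pos : 0 < A.f A.last x₂ := by
      rcases sgn_cases (A.f A.last x₂) with ⟨u1, u2⟩ | ⟨u1, u2⟩ | ⟨u1, u2⟩
      · exact absurd (e₂.symm.trans u1) (a2 _ hl)
      · exact u2
      · exact absurd (e₁.symm.trans ((s1.trans u1.symm).trans e₂)) hlast
    obtain ⟨x, hx0, hpres⟩ := exists_wall_point (A.f A.last) s2 hx₂pos
    exact ⟨x, hx0, fun i hi => by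
      rw [hpres (A.f i) (hsame i hi), hx₁ i (Finset.mem_of_mem_erase hi)]⟩

lemma NArr.lower_inj (A : NArr V) {B C₁ C₂ : ℕ → SignType} (hne : A.E.Nonempty)
    (h₁ : A.IsChamber C₁) (h₂ : A.IsChamber C₂)
    (hu₁ : ¬ A.upperCond B C₁) (hu₂ : ¬ A.upperCond B C₂)
    (heq : restrictSigns (A.E.erase A.last) C₁ = restrictSigns (A.E.erase A.last) C₂) :
    C₁ = C₂ := by
  have heq' : ∀ i ∈ A.E.erase A.last, C₁ i = C₂ i := fun i hi => by
    have := congrFun heq i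
    simpa only [restrictSigns, if_pos hi] using this
  funext i
  by_cases hiE : i ∈ A.E
  · by_cases hil : i = A.last
    · subst hil
      by_contra hCne
      obtain ⟨x, hx0, hx⟩ := A.cut_of_two hne h₁ h₂ heq' hCne
      by_cases hc1 : C₁ A.last = B A.last
      · refine hu₂ ⟨by rw [← hc1]; exact fun h => hCne h.symm, x, hx0, fun j hj => by
          rw [hx j hj, heq' j hj]⟩
      · exact hu₁ ⟨hc1, x, hx0, hx⟩
    · exact heq' i (Finset.mem_erase.mpr ⟨hil, hiE⟩)
  · rw [h₁.2.1 i hiE, h₂.2.1 i hiE]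

lemma NArr.lower_surj (A : NArr V) (B : ℕ → SignType) (hne : A.E.Nonempty)
    (hB : B A.last ≠ 0) {D : ℕ → SignType} (hD : A.delete.IsChamber D) :
    ∃ C, A.IsChamber C ∧ ¬ A.upperCond B C ∧ restrictSigns (A.E.erase A.last) C = D := by
  obtain ⟨d1₀, d2₀, x₀, hx₀₀⟩ := hD
  have d1 : ∀ i ∈ A.E.erase A.last, D i ≠ 0 := d1₀
  have d2 : ∀ i ∉ A.E.erase A.last, D i = 0 := d2₀
  have hx₀ : ∀ i ∈ A.E.erase A.last, sgn (A.f i x₀) = D i := hx₀₀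
  by_cases hcut : ∃ x, A.f A.last x = 0 ∧ ∀ i ∈ A.E.erase A.last, sgn (A.f i x) = D i
  · obtain ⟨x, hx0, hx⟩ := hcut
    obtain ⟨v, hv⟩ := exists_sgn_eq (A.f A.last) (A.nz _ (A.last_mem hne)) hB
    obtain ⟨ε, hε, hδ⟩ := exists_eps A.f x v (A.E.erase A.last) (fun i hi => by
      rw [← sgn_ne_zero_iff, hx i hi]; exact d1 i hi)
    have hylast : sgn (A.f A.last (x + ε • v)) = B A.last := by
      have heq : A.f A.last (x + ε • v) = ε * A.f A.last v := by
        rw [map_add, map_smul, hx0, smul_eq_mul, zero_add]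
      rw [heq, sgn_smul_of_pos hε, hv]
    have hyi : ∀ i ∈ A.E.erase A.last, sgn (A.f i (x + ε • v)) = D i := fun i hi => by
      rw [hδ ε hε le_rfl i hi, hx i hi]
    refine ⟨A.ptSigns (x + ε • v),
      A.chamber_of_point _ (fun i hi => ?_), ?_, ?_⟩
    · by_cases hil : i = A.last
      · subst hil; rw [← sgn_ne_zero_iff, hylast]; exact hB
      · rw [← sgn_ne_zero_iff, hyi i (Finset.mem_erase.mpr ⟨hil, hi⟩)]
        exact d1 i (Finset.mem_erase.mpr ⟨hil, hi⟩)
    · rintro ⟨hCl, -⟩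
      exact hCl (by rw [A.ptSigns_mem _ (A.last_mem hne), hylast])
    · funext i
      by_cases hie : i ∈ A.E.erase A.last
      · simp only [restrictSigns, if_pos hie]
        rw [A.ptSigns_mem _ (Finset.mem_of_mem_erase hie)]
        exact hyi i hie
      · simp only [restrictSigns, if_neg hie]
        exact (d2 i hie).symm
  · have hlx₀ : A.f A.last x₀ ≠ 0 := by
      intro h0
      exact hcut ⟨x₀, h0, hx₀⟩
    refine ⟨A.ptSigns x₀,
      A.chamber_of_point _ (fun i hi => ?_), ?_, ?_⟩
    · by_cases hil : i = A.last
      · subst hil; exact hlx₀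
      · rw [← sgn_ne_zero_iff, hx₀ i (Finset.mem_erase.mpr ⟨hil, hi⟩)]
        exact d1 i (Finset.mem_erase.mpr ⟨hil, hi⟩)
    · rintro ⟨-, x, hx0, hx⟩
      refine hcut ⟨x, hx0, fun i hi => ?_⟩
      rw [hx i hi, A.ptSigns_mem _ (Finset.mem_of_mem_erase hi), hx₀ i hi]
    · funext i
      by_cases hie : i ∈ A.E.erase A.last
      · simp only [restrictSigns, if_pos hie]
        rw [A.ptSigns_mem _ (Finset.mem_of_mem_erase hie)]
        exact hx₀ i hie
      · simp only [restrictSigns, if_neg hie]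
        exact (d2 i hie).symm

lemma NArr.upper_gi_ne (A : NArr V) {B C : ℕ → SignType} (hC : A.IsChamber C)
    (hup : A.upperCond B C) {i : ℕ} (hie : i ∈ A.E.erase A.last) :
    (A.f i).domRestrict (LinearMap.ker (A.f A.last)) ≠ 0 := by
  obtain ⟨-, x, hx0, hx⟩ := hup
  intro h0
  have hzero : A.f i x = 0 := (domRestrict_eq_zero_iff.mp h0) x hx0
  have := hx i hie
  rw [hzero, sgn_zero] at this
  exact hC.1 i (Finset.mem_of_mem_erase hie) this.symm

lemma NArr.upper_inj (A : NArr V) {B C₁ C₂ : ℕ → SignType} (hne : A.E.Nonempty)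
    (hB : B A.last ≠ 0) (h₁ : A.IsChamber C₁) (h₂ : A.IsChamber C₂)
    (hu₁ : A.upperCond B C₁) (hu₂ : A.upperCond B C₂)
    (heq : restrictSigns A.resE C₁ = restrictSigns A.resE C₂) : C₁ = C₂ := by
  have heq' : ∀ i ∈ A.resE, C₁ i = C₂ i := fun i hi => by
    have := congrFun heq i
    simpa only [restrictSigns, if_pos hi] using this
  obtain ⟨hl₁, x₁, hx₁0, hx₁⟩ := hu₁
  obtain ⟨hl₂, x₂, hx₂0, hx₂⟩ := hu₂
  funext i
  by_cases hiE : i ∈ A.E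
  · by_cases hil : i = A.last
    · subst hil
      rw [signType_neg_forced hB (h₁.1 _ (A.last_mem hne)) hl₁,
        signType_neg_forced hB (h₂.1 _ (A.last_mem hne)) hl₂]
    · have hie : i ∈ A.E.erase A.last := Finset.mem_erase.mpr ⟨hil, hiE⟩
      have hgi := A.upper_gi_ne h₁ ⟨hl₁, x₁, hx₁0, hx₁⟩ hie
      obtain ⟨k, hk, hki, hkflat⟩ := A.exists_label hie hgi
      obtain ⟨c, hc0, hc⟩ := A.label_prop hkflat hgi
      have hke : k ∈ A.E.erase A.last := (A.mem_resE.mp hk).1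
      have e₁ : A.f i x₁ = c * A.f k x₁ := by
        have := DFunLike.congr_fun hc ⟨x₁, LinearMap.mem_ker.mpr hx₁0⟩
        simpa using this
      have e₂ : A.f i x₂ = c * A.f k x₂ := by
        have := DFunLike.congr_fun hc ⟨x₂, LinearMap.mem_ker.mpr hx₂0⟩
        simpa using this
      calc C₁ i = sgn (A.f i x₁) := (hx₁ i hie).symm
        _ = sgn c * sgn (A.f k x₁) := by rw [e₁, sgn_mul]
        _ = sgn c * C₁ k := by rw [hx₁ k hke]
        _ = sgn c * C₂ k := by rw [heq' k hk]
        _ = sgn c * sgn (A.f k x₂) := by rw [hx₂ k hke]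
        _ = sgn (A.f i x₂) := by rw [← sgn_mul, ← e₂]
        _ = C₂ i := hx₂ i hie
  · rw [h₁.2.1 i hiE, h₂.2.1 i hiE]

lemma NArr.upper_surj (A : NArr V) (B : ℕ → SignType) (hne : A.E.Nonempty)
    (hB : B A.last ≠ 0)
    (hnd : ∀ i ∈ A.E.erase A.last,
      (A.f i).domRestrict (LinearMap.ker (A.f A.last)) ≠ 0)
    {D : ℕ → SignType} (hD : A.restrict.IsChamber D) :
    ∃ C, A.IsChamber C ∧ A.upperCond B C ∧ restrictSigns A.resE C = D := by
  obtain ⟨d1₀, d2₀, ⟨x, hxker⟩, hx₀⟩ := hD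
  have d1 : ∀ i ∈ A.resE, D i ≠ 0 := d1₀
  have d2 : ∀ i ∉ A.resE, D i = 0 := d2₀
  have hx : ∀ i ∈ A.resE, sgn (A.f i x) = D i := hx₀
  have hxk : A.f A.last x = 0 := LinearMap.mem_ker.mp hxker
  have hxi : ∀ i ∈ A.E.erase A.last, A.f i x ≠ 0 := by
    intro i hie
    obtain ⟨k, hk, -, hkflat⟩ := A.exists_label hie (hnd i hie)
    obtain ⟨c, hc0, hc⟩ := A.label_prop hkflat (hnd i hie)
    have e : A.f i x = c * A.f k x := by
      have := DFunLike.congr_fun hc ⟨x, hxker⟩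
      simpa using this
    have hDk : sgn (A.f k x) = D k := hx k hk
    intro h0
    rw [e, mul_eq_zero] at h0
    rcases h0 with h0 | h0
    · exact hc0 h0
    · exact d1 k hk (by rw [← hDk, h0, sgn_zero])
  obtain ⟨v, hv⟩ := exists_sgn_eq (A.f A.last) (A.nz _ (A.last_mem hne))
    (signType_neg_ne_zero hB)
  obtain ⟨ε, hε, hδ⟩ := exists_eps A.f x v (A.E.erase A.last) hxi
  have hylast : sgn (A.f A.last (x + ε • v)) = -B A.last := by
    have heq : A.f A.last (x + ε • v) = ε * A.f A.last v := by
      rw [map_add, map_smul, hxk, smul_eq_mul, zero_add]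
    rw [heq, sgn_smul_of_pos hε, hv]
  have hyi : ∀ i ∈ A.E.erase A.last, sgn (A.f i (x + ε • v)) = sgn (A.f i x) :=
    fun i hi => hδ ε hε le_rfl i hi
  refine ⟨A.ptSigns (x + ε • v),
    A.chamber_of_point _ (fun i hi => ?_), ⟨?_, x, hxk, fun i hi => ?_⟩, ?_⟩
  · by_cases hil : i = A.last
    · subst hil; rw [← sgn_ne_zero_iff, hylast]; exact signType_neg_ne_zero hB
    · rw [← sgn_ne_zero_iff, hyi i (Finset.mem_erase.mpr ⟨hil, hi⟩)]
      exact sgn_ne_zero_iff.mpr (hxi i (Finset.mem_erase.mpr ⟨hil, hi⟩))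
  · rw [A.ptSigns_mem _ (A.last_mem hne), hylast]
    exact signType_neg_ne_self hB
  · rw [A.ptSigns_mem _ (Finset.mem_of_mem_erase hi), hyi i hi]
  · funext i
    by_cases hie : i ∈ A.resE
    · have hie' := (A.mem_resE.mp hie).1
      simp only [restrictSigns, if_pos hie]
      rw [A.ptSigns_mem _ (Finset.mem_of_mem_erase hie'), hyi i hie']
      exact hx i hie
    · simp only [restrictSigns, if_neg hie]
      exact (d2 i hie).symm

end Aux4


section Aux5

variable {V : Type} [AddCommGroup V] [Module ℝ V]

lemma NArr.circuit_of_dep (A : NArr V) {T : Finset ℕ} (hTE : T ⊆ A.E) (c : ℕ → ℝ)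
    (hsum : ∑ i ∈ T, c i • A.f i = 0) {i₀ : ℕ} (hi₀ : i₀ ∈ T) (hc : c i₀ ≠ 0) :
    ∃ C ⊆ T, A.IsCircuit C := by
  apply A.exists_circuit T hTE
  rw [A.indep_iff]
  rintro ⟨-, h⟩
  exact hc (h c hsum i₀ hi₀)

lemma NArr.circuit_of_dep2 (A : NArr V) {a b : ℕ} (hab : a ≠ b) (haE : a ∈ A.E)
    (hbE : b ∈ A.E) {p q : ℝ} (hp : p ≠ 0) (hsum : p • A.f a + q • A.f b = 0) :
    ∃ C ⊆ ({a, b} : Finset ℕ), A.IsCircuit C := by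
  set c : ℕ → ℝ := fun m => if m = a then p else if m = b then q else 0 with hcdef
  have ca : c a = p := if_pos rfl
  have cb : c b = q := by simp [hcdef, Ne.symm hab]
  refine A.circuit_of_dep ?_ c ?_ (i₀ := a) (by simp) (by rw [ca]; exact hp)
  · intro x hx
    rcases Finset.mem_insert.mp hx with rfl | hx
    · exact haE
    · rw [Finset.mem_singleton.mp hx]; exact hbE
  · rw [Finset.sum_pair hab, ca, cb]
    exact hsum

lemma NArr.circuit_of_dep3 (A : NArr V) {a b d : ℕ} (hab : a ≠ b) (had : a ≠ d)
    (hbd : b ≠ d) (haE : a ∈ A.E) (hbE : b ∈ A.E) (hdE : d ∈ A.E)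
    {p q r : ℝ} (hp : p ≠ 0)
    (hsum : p • A.f a + q • A.f b + r • A.f d = 0) :
    ∃ C ⊆ ({a, b, d} : Finset ℕ), A.IsCircuit C := by
  set c : ℕ → ℝ := fun m => if m = a then p else if m = b then q else if m = d then r else 0
    with hcdef
  have ca : c a = p := if_pos rfl
  have cb : c b = q := by simp [hcdef, Ne.symm hab]
  have cd : c d = r := by simp [hcdef, Ne.symm had, Ne.symm hbd]
  refine A.circuit_of_dep ?_ c ?_ (i₀ := a) (by simp) (by rw [ca]; exact hp)
  · intro x hx
    rcases Finset.mem_insert.mp hx with rfl | hx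
    · exact haE
    rcases Finset.mem_insert.mp hx with rfl | hx
    · exact hbE
    · rw [Finset.mem_singleton.mp hx]; exact hdE
  · rw [Finset.sum_insert (by simp [hab, had]), Finset.sum_pair hbd, ca, cb, cd,
      ← add_assoc]
    exact hsum

lemma NArr.min_ne_last (A : NArr V) (hne : A.E.Nonempty) {C : Finset ℕ}
    (hC : A.IsCircuit C) (hneC : C.Nonempty) : C.min' hneC ≠ A.last := by
  intro h
  have hsing : C = {A.last} := by
    apply Finset.eq_singleton_iff_unique_mem.mpr
    refine ⟨h ▸ C.min'_mem hneC, fun x hx => le_antisymm (A.le_last (hC.1 hx)) ?_⟩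
    exact h ▸ C.min'_le x hx
  exact hC.2.1 (hsing ▸ A.indep_singleton (A.last_mem hne))

lemma NArr.indep_delete_iff (A : NArr V) {S : Finset ℕ} (hS : S ⊆ A.E.erase A.last) :
    A.delete.Indep S ↔ A.Indep S := by
  rw [A.delete.indep_iff, A.indep_iff]
  constructor
  · rintro ⟨-, h⟩; exact ⟨(hS.trans (Finset.erase_subset _ _)), h⟩
  · rintro ⟨-, h⟩; exact ⟨hS, h⟩

lemma NArr.circuit_delete_iff (A : NArr V) {C : Finset ℕ} (hC : C ⊆ A.E.erase A.last) :
    A.delete.IsCircuit C ↔ A.IsCircuit C := by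
  unfold NArr.IsCircuit
  constructor
  · rintro ⟨h1, h2, h3⟩
    refine ⟨hC.trans (Finset.erase_subset _ _), fun h => h2 ((A.indep_delete_iff hC).mpr h),
      fun T hT => (A.indep_delete_iff ((hT.subset).trans hC)).mp (h3 T hT)⟩
  · rintro ⟨h1, h2, h3⟩
    refine ⟨hC, fun h => h2 ((A.indep_delete_iff hC).mp h),
      fun T hT => (A.indep_delete_iff ((hT.subset).trans hC)).mpr (h3 T hT)⟩

lemma NArr.nbc_delete_iff (A : NArr V) (hne : A.E.Nonempty) {S : Finset ℕ} :
    S ∈ A.delete.nbc ↔ (S ∈ A.nbc ∧ A.last ∉ S) := by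
  constructor
  · rintro ⟨hind, hbr⟩
    have hSsub : S ⊆ A.E.erase A.last := hind.1
    have hlS : A.last ∉ S := fun h => (Finset.mem_erase.mp (hSsub h)).1 rfl
    refine ⟨⟨(A.indep_delete_iff hSsub).mp hind, ?_⟩, hlS⟩
    rintro T ⟨C, hC, hneC, rfl⟩ hTsub
    by_cases hlC : A.last ∈ C
    · have : A.last ∈ C.erase (C.min' hneC) :=
        Finset.mem_erase.mpr ⟨fun h => A.min_ne_last hne hC hneC h.symm, hlC⟩
      exact hlS (hTsub this)
    · have hCsub : C ⊆ A.E.erase A.last := fun x hx =>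
        Finset.mem_erase.mpr ⟨fun h => hlC (h ▸ hx), hC.1 hx⟩
      exact hbr _ ⟨C, (A.circuit_delete_iff hCsub).mpr hC, hneC, rfl⟩ hTsub
  · rintro ⟨⟨hind, hbr⟩, hlS⟩
    have hSsub : S ⊆ A.E.erase A.last := fun x hx =>
      Finset.mem_erase.mpr ⟨fun h => hlS (h ▸ hx), hind.1 hx⟩
    refine ⟨(A.indep_delete_iff hSsub).mpr hind, ?_⟩
    rintro T ⟨C, hC, hneC, rfl⟩ hTsub
    have hCsub : C ⊆ A.E.erase A.last := hC.1
    exact hbr _ ⟨C, (A.circuit_delete_iff hCsub).mp hC, hneC, rfl⟩ hTsub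

lemma NArr.no_nbc_last_of_gzero (A : NArr V) (hne : A.E.Nonempty) {i : ℕ}
    (hie : i ∈ A.E.erase A.last)
    (h0 : (A.f i).domRestrict (LinearMap.ker (A.f A.last)) = 0)
    {S : Finset ℕ} (hS : S ∈ A.nbc) (hl : A.last ∈ S) : False := by
  have hiE := Finset.mem_of_mem_erase hie
  obtain ⟨c, hc0, hc⟩ := A.parallel_of_g_zero hiE h0
  obtain ⟨C, hCsub, hC⟩ := A.circuit_of_dep2 (Finset.ne_of_mem_erase hie) hiE
    (A.last_mem hne) (p := 1) (q := -c) one_ne_zero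
    (by rw [hc, one_smul]; module)
  refine A.nbc_no_low_circuit hS hC (j := i) ?_ ?_
  · intro x hx
    rcases Finset.mem_insert.mp (hCsub hx) with rfl | hx'
    · exact Finset.mem_insert_self _ _
    · rw [Finset.mem_singleton.mp hx']
      exact Finset.mem_insert_of_mem hl
  · intro x hx
    rcases Finset.mem_insert.mp (hCsub hx) with rfl | hx'
    · exact le_rfl
    · rw [Finset.mem_singleton.mp hx']
      exact A.le_last hiE

lemma NArr.nbc_erase_subset_resE (A : NArr V) (hne : A.E.Nonempty) {S : Finset ℕ}
    (hS : S ∈ A.nbc) (hl : A.last ∈ S) : S.erase A.last ⊆ A.resE := by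
  intro i hi
  obtain ⟨hil, hiS⟩ := Finset.mem_erase.mp hi
  have hiE : i ∈ A.E := hS.1.1 hiS
  have hie : i ∈ A.E.erase A.last := Finset.mem_erase.mpr ⟨hil, hiE⟩
  have hgi : (A.f i).domRestrict (LinearMap.ker (A.f A.last)) ≠ 0 := by
    intro h0
    exact A.no_nbc_last_of_gzero hne hie h0 hS hl
  refine A.mem_resE.mpr ⟨hie, hgi, fun j hj hflat => ?_⟩
  by_contra hji
  push_neg at hji
  have hjE := Finset.mem_of_mem_erase hj
  have hgj : (A.f j).domRestrict (LinearMap.ker (A.f A.last)) ≠ 0 := by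
    intro h0
    exact A.no_nbc_last_of_gzero hne hj h0 hS hl
  obtain ⟨c, hc0, hcg⟩ := A.label_prop hflat hgi
  -- A.f i - c • A.f j vanishes on ker (A.f A.last)
  have hvan : ∀ x, A.f A.last x = 0 → (A.f i - c • A.f j) x = 0 := by
    intro x hx
    have := DFunLike.congr_fun hcg ⟨x, LinearMap.mem_ker.mpr hx⟩
    simp only [LinearMap.domRestrict_apply, LinearMap.smul_apply, smul_eq_mul] at this
    simp only [LinearMap.sub_apply, LinearMap.smul_apply, smul_eq_mul, this, sub_self]
  obtain ⟨b, hb⟩ := exists_smul_of_vanishing _ _ hvan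
  have hsum : (1:ℝ) • A.f i + (-c) • A.f j + (-b) • A.f A.last = 0 := by
    have : A.f i - c • A.f j = b • A.f A.last := hb
    rw [one_smul]
    rw [sub_eq_iff_eq_add] at this
    rw [this]; module
  have hij : i ≠ j := fun h => hji.ne (h ▸ rfl)
  obtain ⟨C, hCsub, hC⟩ := A.circuit_of_dep3 hij (Finset.ne_of_mem_erase hie)
    (Finset.ne_of_mem_erase hj) hiE hjE (A.last_mem hne) one_ne_zero hsum
  refine A.nbc_no_low_circuit hS hC (j := j) ?_ ?_
  · intro x hx
    rcases Finset.mem_insert.mp (hCsub hx) with rfl | hx'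
    · exact Finset.mem_insert_of_mem hiS
    rcases Finset.mem_insert.mp hx' with rfl | hx''
    · exact Finset.mem_insert_self _ _
    · rw [Finset.mem_singleton.mp hx'']
      exact Finset.mem_insert_of_mem hl
  · intro x hx
    rcases Finset.mem_insert.mp (hCsub hx) with rfl | hx'
    · exact le_of_lt hji
    rcases Finset.mem_insert.mp hx' with rfl | hx''
    · exact le_rfl
    · rw [Finset.mem_singleton.mp hx'']
      exact A.le_last hjE

lemma NArr.indep_insert_last (A : NArr V) (hne : A.E.Nonempty) {S'' : Finset ℕ}
    (hS'' : S'' ⊆ A.resE) :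
    A.Indep (insert A.last S'') ↔ A.restrict.Indep S'' := by
  have hSe : S'' ⊆ A.E.erase A.last := fun x hx => (A.mem_resE.mp (hS'' hx)).1
  have hlS : A.last ∉ S'' := fun h => (Finset.mem_erase.mp (hSe h)).1 rfl
  have hSE : S'' ⊆ A.E := hSe.trans (Finset.erase_subset _ _)
  rw [A.indep_iff, A.restrict.indep_iff]
  constructor
  · rintro ⟨-, h⟩
    refine ⟨hS'', fun c hc i hi => ?_⟩
    have hc' : ∑ i ∈ S'', c i • (A.f i).domRestrict (LinearMap.ker (A.f A.last)) = 0 := hc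
    rw [A.sum_g_eq_zero_iff] at hc'
    obtain ⟨b, hb⟩ := hc'
    set c' : ℕ → ℝ := fun m => if m = A.last then -b else c m with hcdef
    have hsum : ∑ m ∈ insert A.last S'', c' m • A.f m = 0 := by
      rw [Finset.sum_insert hlS]
      have : ∑ m ∈ S'', c' m • A.f m = ∑ m ∈ S'', c m • A.f m := by
        refine Finset.sum_congr rfl fun m hm => ?_
        rw [hcdef]; simp only
        rw [if_neg (Finset.ne_of_mem_erase (hSe hm))]
      rw [this, hb, hcdef]; simp; module
    have h0 := h c' hsum i (Finset.mem_insert_of_mem hi)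
    have hci : c' i = c i := by simp [hcdef, Finset.ne_of_mem_erase (hSe hi)]
    exact hci.symm.trans h0
  · rintro ⟨-, h⟩
    refine ⟨Finset.insert_subset (A.last_mem hne) hSE, fun c hc i hi => ?_⟩
    rw [Finset.sum_insert hlS] at hc
    have hzS : ∀ j ∈ S'', c j = 0 := by
      refine h c ?_
      show ∑ i ∈ S'', c i • (A.f i).domRestrict (LinearMap.ker (A.f A.last)) = 0
      rw [A.sum_g_eq_zero_iff]
      refine ⟨-(c A.last), ?_⟩
      rw [neg_smul (M := V →ₗ[ℝ] ℝ)]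
      have hc2 : ∑ x ∈ S'', c x • A.f x + c A.last • A.f A.last = 0 := by
        rw [add_comm]; exact hc
      exact eq_neg_of_add_eq_zero_left hc2
    have hcl : c A.last = 0 := by
      have hrest : ∑ i ∈ S'', c i • A.f i = 0 :=
        Finset.sum_eq_zero fun j hj => by rw [hzS j hj, zero_smul]
      rw [hrest, add_zero] at hc
      rcases smul_eq_zero.mp hc with h' | h'
      · exact h'
      · exact absurd h' (A.nz _ (A.last_mem hne))
    rcases Finset.mem_insert.mp hi with rfl | hi'
    · exact hcl
    · exact hzS i hi'

lemma NArr.nbc_erase_mem_restrict (A : NArr V) (hne : A.E.Nonempty) {S : Finset ℕ}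
    (hS : S ∈ A.nbc) (hl : A.last ∈ S) : S.erase A.last ∈ A.restrict.nbc := by
  have hsub := A.nbc_erase_subset_resE hne hS hl
  constructor
  · have hins : insert A.last (S.erase A.last) = S := Finset.insert_erase hl
    exact (A.indep_insert_last hne hsub).mp (by rw [hins]; exact hS.1)
  · rintro T ⟨C'', hC'', hne'', rfl⟩ hTsub
    obtain ⟨a, hsum'', ha⟩ := A.restrict.circuit_coeffs hC''
    have hC''res : C'' ⊆ A.resE := hC''.1
    have hC''e : C'' ⊆ A.E.erase A.last := fun x hx => (A.mem_resE.mp (hC''res hx)).1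
    have hsum2 : ∑ i ∈ C'', a i • (A.f i).domRestrict (LinearMap.ker (A.f A.last)) = 0 :=
      hsum''
    rw [A.sum_g_eq_zero_iff] at hsum2
    obtain ⟨b, hb⟩ := hsum2
    have hlC'' : A.last ∉ C'' := fun h => (Finset.mem_erase.mp (hC''e h)).1 rfl
    set c' : ℕ → ℝ := fun m => if m = A.last then -b else a m with hcdef
    have hsum : ∑ m ∈ insert A.last C'', c' m • A.f m = 0 := by
      rw [Finset.sum_insert hlC'']
      have : ∑ m ∈ C'', c' m • A.f m = ∑ m ∈ C'', a m • A.f m := by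
        refine Finset.sum_congr rfl fun m hm => ?_
        rw [hcdef]; simp only
        rw [if_neg (Finset.ne_of_mem_erase (hC''e hm))]
      rw [this, hb, hcdef]; simp; module
    obtain ⟨i₁, hi₁⟩ := hne''
    obtain ⟨C, hCsub, hC⟩ := A.circuit_of_dep
      (Finset.insert_subset (A.last_mem hne)
        ((hC''e.trans (Finset.erase_subset _ _)))) c' hsum
      (i₀ := i₁) (Finset.mem_insert_of_mem hi₁)
      (by have : c' i₁ = a i₁ := by
            simp [hcdef, Finset.ne_of_mem_erase (hC''e hi₁)]
          rw [this]; exact ha i₁ hi₁)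
    refine A.nbc_no_low_circuit hS hC (j := C''.min' ⟨i₁, hi₁⟩) ?_ ?_
    · intro x hx
      rcases Finset.mem_insert.mp (hCsub hx) with rfl | hx'
      · exact Finset.mem_insert_of_mem hl
      · by_cases hxm : x = C''.min' ⟨i₁, hi₁⟩
        · rw [hxm]; exact Finset.mem_insert_self _ _
        · have hmem : x ∈ C''.erase (C''.min' ⟨i₁, hi₁⟩) := Finset.mem_erase.mpr ⟨hxm, hx'⟩
          exact Finset.mem_insert_of_mem (Finset.mem_of_mem_erase (hTsub hmem))
    · intro x hx
      rcases Finset.mem_insert.mp (hCsub hx) with rfl | hx'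
      · exact le_of_lt (A.lt_last (hC''e (C''.min'_mem ⟨i₁, hi₁⟩)))
      · exact C''.min'_le x hx'

lemma NArr.nbc_insert_last (A : NArr V) (hne : A.E.Nonempty)
    (hnd : ∀ i ∈ A.E.erase A.last,
      (A.f i).domRestrict (LinearMap.ker (A.f A.last)) ≠ 0)
    {S'' : Finset ℕ} (hS'' : S'' ∈ A.restrict.nbc) :
    insert A.last S'' ∈ A.nbc := by
  have hsub : S'' ⊆ A.resE := hS''.1.1
  refine ⟨(A.indep_insert_last hne hsub).mpr hS''.1, ?_⟩
  rintro T ⟨C, hC, hneC, rfl⟩ hTsub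
  obtain ⟨a, hsum, ha⟩ := A.circuit_coeffs hC
  set m := C.min' hneC with hmdef
  have hmC : m ∈ C := C.min'_mem hneC
  have hml : m ≠ A.last := A.min_ne_last hne hC hneC
  set D := C.erase A.last with hDdef
  have hmD : m ∈ D := Finset.mem_erase.mpr ⟨hml, hmC⟩
  have hDe : D ⊆ A.E.erase A.last := fun x hx =>
    Finset.mem_erase.mpr ⟨(Finset.mem_erase.mp hx).1, hC.1 (Finset.mem_of_mem_erase hx)⟩
  -- restrict the circuit relation to the last hyperplane
  have hg : ∑ i ∈ D, a i • (A.f i).domRestrict (LinearMap.ker (A.f A.last)) = 0 := by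
    rw [A.sum_g_eq_zero_iff]
    by_cases hlC : A.last ∈ C
    · refine ⟨-(a A.last), ?_⟩
      have := Finset.sum_erase_add C (fun i => a i • A.f i) hlC
      rw [hDdef, neg_smul (M := V →ₗ[ℝ] ℝ), ← sub_eq_zero]
      rw [← this] at hsum
      rw [sub_neg_eq_add, hsum]
    · refine ⟨0, ?_⟩
      rw [zero_smul, hDdef, Finset.erase_eq_of_notMem hlC]
      exact hsum
  have hmE : m ∈ A.E.erase A.last := hDe hmD
  obtain ⟨k, hk, hkm, hkflat⟩ := A.exists_label hmE (hnd m hmE)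
  obtain ⟨c, hc0, hcg⟩ := A.label_prop hkflat (hnd m hmE)
  -- every element of D.erase m lies in S''
  have hDm_sub : D.erase m ⊆ S'' := by
    intro x hx
    obtain ⟨hxm, hxD⟩ := Finset.mem_erase.mp hx
    obtain ⟨hxl, hxC⟩ := Finset.mem_erase.mp hxD
    have : x ∈ insert A.last S'' := hTsub (Finset.mem_erase.mpr ⟨hxm, hxC⟩)
    rcases Finset.mem_insert.mp this with rfl | h
    · exact absurd rfl hxl
    · exact h
  have hkD : k ∉ D.erase m := by
    intro hkDm
    have hkm' : k ≠ m := (Finset.mem_erase.mp hkDm).1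
    have hkC : k ∈ C := Finset.mem_of_mem_erase (Finset.mem_of_mem_erase hkDm)
    exact hkm' (le_antisymm hkm (C.min'_le k hkC))
  -- dependency in the restriction over insert k (D.erase m)
  set c'' : ℕ → ℝ := fun x => if x = k then a m * c else a x with hcdef
  have hsum'' : ∑ x ∈ insert k (D.erase m), c'' x • A.restrict.f x = 0 := by
    rw [Finset.sum_insert hkD]
    have h1 : ∑ x ∈ D.erase m, c'' x • A.restrict.f x
        = ∑ x ∈ D.erase m, a x • (A.f x).domRestrict (LinearMap.ker (A.f A.last)) := by
      refine Finset.sum_congr rfl fun x hx => ?_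
      have hxa : c'' x = a x := by
        simp [hcdef, show x ≠ k from fun h => hkD (h ▸ hx)]
      rw [hxa]; rfl
    have h2 : (c'' k) • A.restrict.f k
        = a m • (A.f m).domRestrict (LinearMap.ker (A.f A.last)) := by
      have hck : c'' k = a m * c := by simp [hcdef]
      rw [hck]
      show (a m * c) • (A.f k).domRestrict (LinearMap.ker (A.f A.last)) = _
      rw [hcg, smul_smul]
    rw [h1, h2, ← hg]
    exact Finset.add_sum_erase D
      (fun i => a i • (A.f i).domRestrict (LinearMap.ker (A.f A.last))) hmD
  have hkinsert : insert k (D.erase m) ⊆ A.restrict.E := by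
    intro x hx
    rcases Finset.mem_insert.mp hx with rfl | hx'
    · exact hk
    · exact hsub (hDm_sub hx')
  obtain ⟨C'', hC''sub, hC''⟩ := A.restrict.circuit_of_dep hkinsert c'' hsum''
    (i₀ := k) (Finset.mem_insert_self _ _)
    (by rw [hcdef]; simp only [if_pos rfl]; exact mul_ne_zero (ha m hmC) hc0)
  refine A.restrict.nbc_no_low_circuit hS'' hC'' (j := k) ?_ ?_
  · intro x hx
    rcases Finset.mem_insert.mp (hC''sub hx) with rfl | hx'
    · exact Finset.mem_insert_self _ _
    · exact Finset.mem_insert_of_mem (hDm_sub hx')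
  · intro x hx
    rcases Finset.mem_insert.mp (hC''sub hx) with rfl | hx'
    · exact le_rfl
    · have hxC := Finset.mem_of_mem_erase (Finset.mem_of_mem_erase hx')
      exact hkm.trans (C.min'_le x hxC)

end Aux5


section Main

variable {V : Type} [AddCommGroup V] [Module ℝ V]

lemma restrictSigns_mem {S : Finset ℕ} {C : ℕ → SignType} {i : ℕ} (hi : i ∈ S) :
    restrictSigns S C i = C i := if_pos hi

lemma restrictSigns_not_mem {S : Finset ℕ} {C : ℕ → SignType} {i : ℕ} (hi : i ∉ S) :
    restrictSigns S C i = 0 := if_neg hi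

lemma NArr.bijon_empty (A : NArr V) (hE : A.E = ∅) (η : (ℕ → SignType) → Finset ℕ)
    (hval : ∀ C, η C = ∅) : Set.BijOn η {C | A.IsChamber C} A.nbc := by
  have hch : {C | A.IsChamber C} = {fun _ => 0} := by
    ext C
    simp only [Set.mem_setOf_eq, Set.mem_singleton_iff]
    constructor
    · rintro ⟨-, h2, -⟩
      funext i
      exact h2 i (by rw [hE]; simp)
    · rintro rfl
      exact ⟨fun i hi => by rw [hE] at hi; simp at hi, fun i _ => rfl,
        ⟨0, fun i hi => by rw [hE] at hi; simp at hi⟩⟩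
  have hnbc : A.nbc = {∅} := by
    ext S
    simp only [Set.mem_singleton_iff]
    constructor
    · rintro ⟨⟨hsub, -⟩, -⟩
      exact Finset.subset_empty.mp (hE ▸ hsub)
    · rintro rfl
      refine ⟨A.indep_empty, ?_⟩
      rintro T ⟨C, hC, hneC, rfl⟩ hTsub
      obtain ⟨x, hx⟩ := hneC
      have := hC.1 hx
      rw [hE] at this
      simp at this
  rw [hch, hnbc]
  refine ⟨fun C _ => by rw [Set.mem_singleton_iff, hval C], fun C₁ h₁ C₂ h₂ _ => h₁.trans h₂.symm,
    fun S hS => ⟨fun _ => 0, rfl, by rw [hval]; exact (Set.mem_singleton_iff.mp hS).symm⟩⟩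

theorem jo_key : ∀ (N : ℕ) (V : Type) [AddCommGroup V] [Module ℝ V]
    (A : NArr V) (B : ℕ → SignType) (η : (ℕ → SignType) → Finset ℕ),
    IsJO V A B η → (∀ i ∈ A.E, B i ≠ 0) → A.E.card ≤ N →
    Set.BijOn η {C | A.IsChamber C} A.nbc := by
  intro N
  induction N with
  | zero =>
    intro V _ _ A B η hη hB hcard
    have hE : A.E = ∅ := Finset.card_eq_zero.mp (Nat.le_zero.mp hcard)
    cases hη with
    | base _ _ _ hE' hval => exact A.bijon_empty hE _ hval
    | step _ _ _ η' η'' hne' hJO' hJO'' hlow hup =>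
      rw [hE] at hne'
      exact absurd hne' (by simp)
  | succ N ih =>
    intro V _ _ A B η hη hB hcard
    rcases Finset.eq_empty_or_nonempty A.E with hE | hne
    · cases hη with
      | base _ _ _ hE' hval => exact A.bijon_empty hE _ hval
      | step _ _ _ η' η'' hne' hJO' hJO'' hlow hup =>
        rw [hE] at hne'
        exact absurd hne' (by simp)
    · cases hη with
      | base _ _ _ hE' hval =>
        rw [hE'] at hne
        exact absurd hne (by simp)
      | step _ _ _ η' η'' hne' hJO' hJO'' hlow hup =>
        have hBlast : B A.last ≠ 0 := hB _ (A.last_mem hne)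
        -- the inductive hypotheses for the deletion and the restriction
        have hcard' : A.delete.E.card ≤ N := by
          have h1 : (A.E.erase A.last).card = A.E.card - 1 :=
            Finset.card_erase_of_mem (A.last_mem hne)
          have h2 : 1 ≤ A.E.card := Finset.card_pos.mpr hne
          show (A.E.erase A.last).card ≤ N
          omega
        have hcard'' : A.restrict.E.card ≤ N := by
          have h0 : A.resE ⊆ A.E.erase A.last := Finset.filter_subset _ _
          have h1 := Finset.card_le_card h0
          show A.resE.card ≤ N
          exact h1.trans hcard'
        have hB' : ∀ i ∈ A.delete.E, restrictSigns (A.E.erase A.last) B i ≠ 0 := by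
          intro i hi
          rw [restrictSigns_mem (show i ∈ A.E.erase A.last from hi)]
          exact hB i (Finset.mem_of_mem_erase hi)
        have hB'' : ∀ i ∈ A.restrict.E, restrictSigns A.resE B i ≠ 0 := by
          intro i hi
          rw [restrictSigns_mem (show i ∈ A.resE from hi)]
          exact hB i (Finset.mem_of_mem_erase (A.mem_resE.mp hi).1)
        have IH' := ih V A.delete _ η' hJO' hB' hcard'
        have IH'' := ih _ A.restrict _ η'' hJO'' hB'' hcard''
        constructor
        · -- maps to
          intro C hC
          simp only [Set.mem_setOf_eq] at hC
          by_cases hu : A.upperCond B C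
          · rw [hup C hC hu]
            have hnd : ∀ i ∈ A.E.erase A.last,
                (A.f i).domRestrict (LinearMap.ker (A.f A.last)) ≠ 0 :=
              fun i hi => A.upper_gi_ne hC hu hi
            exact A.nbc_insert_last hne hnd
              (IH''.1 (A.chamber_restrict_of_upper hC hu))
          · rw [hlow C hC hu]
            exact ((A.nbc_delete_iff hne).mp (IH'.1 (A.chamber_delete hC))).1
        constructor
        · -- injective
          intro C₁ h₁ C₂ h₂ heq
          simp only [Set.mem_setOf_eq] at h₁ h₂
          by_cases hu₁ : A.upperCond B C₁ <;> by_cases hu₂ : A.upperCond B C₂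
          · -- both upper
            rw [hup C₁ h₁ hu₁, hup C₂ h₂ hu₂] at heq
            have hch₁ := A.chamber_restrict_of_upper h₁ hu₁
            have hch₂ := A.chamber_restrict_of_upper h₂ hu₂
            have hnl : ∀ {C' : ℕ → SignType}, A.restrict.IsChamber C' →
                A.last ∉ η'' C' := by
              intro C' hC' hmem
              have hsub : η'' C' ⊆ A.resE := (IH''.1 hC').1.1
              exact (Finset.mem_erase.mp ((A.mem_resE.mp (hsub hmem)).1)).1 rfl
            have heq'' : η'' (restrictSigns A.resE C₁) = η'' (restrictSigns A.resE C₂) := by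
              have e₁ := Finset.erase_insert (hnl hch₁)
              have e₂ := Finset.erase_insert (hnl hch₂)
              rw [← e₁, ← e₂, heq]
            have := IH''.2.1 hch₁ hch₂ heq''
            exact A.upper_inj hne hBlast h₁ h₂ hu₁ hu₂ this
          · -- mixed
            exfalso
            rw [hup C₁ h₁ hu₁, hlow C₂ h₂ hu₂] at heq
            have : A.last ∉ η' (restrictSigns (A.E.erase A.last) C₂) :=
              ((A.nbc_delete_iff hne).mp (IH'.1 (A.chamber_delete h₂))).2
            rw [← heq] at this
            exact this (Finset.mem_insert_self _ _)
          · -- mixed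
            exfalso
            rw [hlow C₁ h₁ hu₁, hup C₂ h₂ hu₂] at heq
            have : A.last ∉ η' (restrictSigns (A.E.erase A.last) C₁) :=
              ((A.nbc_delete_iff hne).mp (IH'.1 (A.chamber_delete h₁))).2
            rw [heq] at this
            exact this (Finset.mem_insert_self _ _)
          · -- both lower
            rw [hlow C₁ h₁ hu₁, hlow C₂ h₂ hu₂] at heq
            have := IH'.2.1 (A.chamber_delete h₁) (A.chamber_delete h₂) heq
            exact A.lower_inj hne h₁ h₂ hu₁ hu₂ this
        · -- surjective
          intro S hS
          by_cases hlS : A.last ∈ S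
          · have hnd : ∀ i ∈ A.E.erase A.last,
                (A.f i).domRestrict (LinearMap.ker (A.f A.last)) ≠ 0 :=
              fun i hi h0 => A.no_nbc_last_of_gzero hne hi h0 hS hlS
            have hS'' := A.nbc_erase_mem_restrict hne hS hlS
            obtain ⟨D'', hD''mem, hD''⟩ := IH''.2.2 hS''
            simp only [Set.mem_setOf_eq] at hD''mem
            obtain ⟨C, hCch, hCu, hCres⟩ := A.upper_surj B hne hBlast hnd hD''mem
            refine ⟨C, hCch, ?_⟩
            rw [hup C hCch hCu, hCres, hD'']
            exact Finset.insert_erase hlS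
          · have hS' : S ∈ A.delete.nbc := (A.nbc_delete_iff hne).mpr ⟨hS, hlS⟩
            obtain ⟨D, hDmem, hD⟩ := IH'.2.2 hS'
            simp only [Set.mem_setOf_eq] at hDmem
            obtain ⟨C, hCch, hCu, hCres⟩ := A.lower_surj B hne hBlast hDmem
            refine ⟨C, hCch, ?_⟩
            rw [hlow C hCch hCu, hCres, hD]

theorem jo_base : ∀ (N : ℕ) (V : Type) [AddCommGroup V] [Module ℝ V]
    (A : NArr V) (B : ℕ → SignType) (η : (ℕ → SignType) → Finset ℕ),
    IsJO V A B η → A.IsChamber B → A.E.card ≤ N → η B = ∅ := by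
  intro N
  induction N with
  | zero =>
    intro V _ _ A B η hη hB hcard
    cases hη with
    | base _ _ _ hE' hval => exact hval B
    | step _ _ _ η' η'' hne' hJO' hJO'' hlow hup =>
      rw [Finset.card_eq_zero.mp (Nat.le_zero.mp hcard)] at hne'
      exact absurd hne' (by simp)
  | succ N ih =>
    intro V _ _ A B η hη hB hcard
    cases hη with
    | base _ _ _ hE' hval => exact hval B
    | step _ _ _ η' η'' hne' hJO' hJO'' hlow hup =>
      have hnup : ¬ A.upperCond B B := fun h => h.1 rfl
      rw [hlow B hB hnup]
      have hcard' : A.delete.E.card ≤ N := by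
        have h1 : (A.E.erase A.last).card = A.E.card - 1 :=
          Finset.card_erase_of_mem (A.last_mem hne')
        have h2 : 1 ≤ A.E.card := Finset.card_pos.mpr hne'
        show (A.E.erase A.last).card ≤ N
        omega
      exact ih V A.delete _ η' hJO' (A.chamber_delete hB) hcard'

end Main

/-- Jewell–Orlik bijection: if the ordering of the hyperplanes of `A` satisfies the cut
property with respect to the base chamber `B`, then the recursively defined map `η`
restricts to a bijection from the chambers of `A` onto the no-broken-circuit sets of
`A`, with `η(B) = ∅`. -/
theorem jewell_orlik_bijection (A : NArr V) (B : ℕ → SignType)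
    (hB : A.IsChamber B) (hcut : A.CutProp B)
    (η : (ℕ → SignType) → Finset ℕ) (hη : IsJO V A B η) :
    Set.BijOn η {C | A.IsChamber C} A.nbc ∧ η B = ∅ :=
  ⟨jo_key A.E.card V A B η hη (fun i hi => hB.1 i hi) le_rfl,
   jo_base A.E.card V A B η hη hB le_rfl⟩
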